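/- Let K be a field and let A be the quotient of the free (noncommutative) K-algebra on three generators a, x, y by the two-sided ideal generated by the elements a·x − y, a·y, x·a, y·a, x², y², x·y, y·x. Then the family consisting of the images of the powers aⁿ (n ∈ ℕ, with a⁰ = 1) together with the images of x and y is a basis of A as a K-vector space. -/

import Mathlib

/-- The set of generators a·x − y, a·y, x·a, y·a, x², y², x·y, y·x of the two-sided ideal,
where a, x, y are the three generators of the free algebra. -/
noncomputable def paperGens (K : Type*) [Field K] : Set (FreeAlgebra K (Fin 3)) :=
  letI a := FreeAlgebra.ι K (0 : Fin 3)
  letI x := FreeAlgebra.ι K (1 : Fin 3)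
  letI y := FreeAlgebra.ι K (2 : Fin 3)
  {a * x - y, a * y, x * a, y * a, x ^ 2, y ^ 2, x * y, y * x}

/-- The relation identifying each ideal generator with 0, so that `RingQuot` of it is the
quotient of the free algebra by the two-sided ideal generated by `paperGens K`. -/
def paperRel (K : Type*) [Field K] :
    FreeAlgebra K (Fin 3) → FreeAlgebra K (Fin 3) → Prop :=
  fun p q => p ∈ paperGens K ∧ q = 0

/-- A = K⟨a,x,y⟩ / ⟨a·x − y, a·y, x·a, y·a, x², y², x·y, y·x⟩. -/
abbrev paperA (K : Type*) [Field K] : Type _ := RingQuot (paperRel K)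

/-- The quotient map onto A. -/
noncomputable def paperMk (K : Type*) [Field K] : FreeAlgebra K (Fin 3) →ₐ[K] paperA K :=
  RingQuot.mkAlgHom K (paperRel K)



noncomputable section

variable (K : Type*) [Field K]

def ModelB : Type _ := Polynomial K × (Fin 2 → K)

namespace ModelB

instance : AddCommGroup (ModelB K) := inferInstanceAs (AddCommGroup (Polynomial K × (Fin 2 → K)))
instance : Module K (ModelB K) := inferInstanceAs (Module K (Polynomial K × (Fin 2 → K)))

variable {K}

def mk' (p : Polynomial K) (f : Fin 2 → K) : ModelB K := (p, f)

@[simp] lemma mk'_fst (p : Polynomial K) (f : Fin 2 → K) : (mk' p f).1 = p := rfl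
@[simp] lemma mk'_snd (p : Polynomial K) (f : Fin 2 → K) : (mk' p f).2 = f := rfl

def mulB (u v : ModelB K) : ModelB K :=
  (u.1 * v.1, ![u.1.coeff 0 * v.2 0 + v.1.coeff 0 * u.2 0,
                u.1.coeff 0 * v.2 1 + v.1.coeff 0 * u.2 1 + u.1.coeff 1 * v.2 0])

instance : Mul (ModelB K) := ⟨mulB⟩
instance : One (ModelB K) := ⟨((1 : Polynomial K), 0)⟩

lemma mul_def (u v : ModelB K) :
    u * v = mk' (u.1 * v.1) ![u.1.coeff 0 * v.2 0 + v.1.coeff 0 * u.2 0,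
                u.1.coeff 0 * v.2 1 + v.1.coeff 0 * u.2 1 + u.1.coeff 1 * v.2 0] := rfl

lemma one_def : (1 : ModelB K) = mk' (1 : Polynomial K) 0 := rfl

lemma fst_add (u v : ModelB K) : (u + v).1 = u.1 + v.1 := rfl
lemma snd_add (u v : ModelB K) : (u + v).2 = u.2 + v.2 := rfl
lemma fst_zero : (0 : ModelB K).1 = 0 := rfl
lemma snd_zero : (0 : ModelB K).2 = 0 := rfl
lemma fst_smul (r : K) (u : ModelB K) : (r • u).1 = r • u.1 := rfl
lemma snd_smul (r : K) (u : ModelB K) : (r • u).2 = r • u.2 := rfl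

private lemma coeff_mul_one' (p q : Polynomial K) :
    (p*q).coeff 1 = p.coeff 0 * q.coeff 1 + p.coeff 1 * q.coeff 0 := by
  rw [Polynomial.coeff_mul]
  rw [show (1:ℕ) = 0 + 1 from rfl, Finset.Nat.sum_antidiagonal_succ]
  simp [Finset.Nat.antidiagonal_zero]

section laws
variable (u v w : ModelB K)

private lemma law_ldistrib : u * (v + w) = u * v + u * w := by
  refine Prod.ext (by simp [mul_def, fst_add]; ring) ?_
  funext i
  fin_cases i <;>
    · simp [mul_def, fst_add, snd_add, Polynomial.coeff_add]
      ring

private lemma law_rdistrib : (u + v) * w = u * w + v * w := by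
  refine Prod.ext (by simp [mul_def, fst_add]; ring) ?_
  funext i
  fin_cases i <;>
    · simp [mul_def, fst_add, snd_add, Polynomial.coeff_add]
      ring

private lemma law_zero_mul : (0 : ModelB K) * u = 0 := by
  refine Prod.ext (by simp [mul_def, fst_zero]) ?_
  funext i
  fin_cases i <;> simp [mul_def, fst_zero, snd_zero]

private lemma law_mul_zero : u * (0 : ModelB K) = 0 := by
  refine Prod.ext (by simp [mul_def, fst_zero]) ?_
  funext i
  fin_cases i <;> simp [mul_def, fst_zero, snd_zero]

private lemma law_assoc : u * v * w = u * (v * w) := by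
  refine Prod.ext (by simp [mul_def]; ring) ?_
  funext i
  fin_cases i <;>
    · simp [mul_def, Polynomial.mul_coeff_zero, coeff_mul_one']
      ring

private lemma law_one_mul : (1 : ModelB K) * u = u := by
  refine Prod.ext (by simp [mul_def, one_def]) ?_
  funext i
  fin_cases i <;> simp [mul_def, one_def, snd_zero, Polynomial.coeff_one]

private lemma law_mul_one : u * (1 : ModelB K) = u := by
  refine Prod.ext (by simp [mul_def, one_def]) ?_
  funext i
  fin_cases i <;> simp [mul_def, one_def, snd_zero, Polynomial.coeff_one]

end laws

instance : Ring (ModelB K) :=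
  { (inferInstance : AddCommGroup (ModelB K)) with
    mul := (· * ·), one := 1
    left_distrib := law_ldistrib, right_distrib := law_rdistrib
    zero_mul := law_zero_mul, mul_zero := law_mul_zero
    mul_assoc := law_assoc, one_mul := law_one_mul, mul_one := law_mul_one }

instance : Algebra K (ModelB K) :=
  Algebra.ofModule
    (fun (r : K) (u v : ModelB K) => by
      refine Prod.ext (by simp [mul_def, fst_smul, smul_eq_mul]; try ring) ?_
      funext i
      fin_cases i <;>
        · simp [mul_def, fst_smul, snd_smul, Polynomial.coeff_smul, smul_eq_mul]
          ring)
    (fun (r : K) (u v : ModelB K) => by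
      refine Prod.ext (by simp [mul_def, fst_smul, smul_eq_mul]; try ring) ?_
      funext i
      fin_cases i <;>
        · simp [mul_def, fst_smul, snd_smul, Polynomial.coeff_smul, smul_eq_mul]
          ring)

end ModelB


namespace ModelB

variable {K}

def aM : ModelB K := mk' Polynomial.X 0
def xM : ModelB K := mk' 0 (Pi.single 0 1)
def yM : ModelB K := mk' 0 (Pi.single 1 1)

lemma aM_mul_xM : (aM : ModelB K) * xM = yM := by
  refine Prod.ext (by simp [mul_def, aM, xM, yM]) ?_
  funext i
  fin_cases i <;> simp [mul_def, aM, xM, yM, Pi.single_apply]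

lemma aM_mul_yM : (aM : ModelB K) * yM = 0 := by
  refine Prod.ext (by simp [mul_def, aM, yM, fst_zero]) ?_
  funext i
  fin_cases i <;> simp [mul_def, aM, yM, snd_zero, Pi.single_apply]

lemma xM_mul_aM : (xM : ModelB K) * aM = 0 := by
  refine Prod.ext (by simp [mul_def, aM, xM, fst_zero]) ?_
  funext i
  fin_cases i <;> simp [mul_def, aM, xM, snd_zero, Pi.single_apply]

lemma yM_mul_aM : (yM : ModelB K) * aM = 0 := by
  refine Prod.ext (by simp [mul_def, aM, yM, fst_zero]) ?_
  funext i
  fin_cases i <;> simp [mul_def, aM, yM, snd_zero, Pi.single_apply]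

lemma snd_mul_snd (f g : Fin 2 → K) : (mk' 0 f : ModelB K) * mk' 0 g = 0 := by
  refine Prod.ext (by simp [mul_def, fst_zero]) ?_
  funext i
  fin_cases i <;>
    simp only [mul_def, snd_zero, Polynomial.coeff_zero, zero_mul, add_zero, zero_add,
      Matrix.cons_val_zero, Matrix.cons_val_one, Matrix.head_cons, Pi.zero_apply] <;>
    norm_num

lemma xM_mul_xM : (xM : ModelB K) * xM = 0 := snd_mul_snd _ _
lemma yM_mul_yM : (yM : ModelB K) * yM = 0 := snd_mul_snd _ _
lemma xM_mul_yM : (xM : ModelB K) * yM = 0 := snd_mul_snd _ _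
lemma yM_mul_xM : (yM : ModelB K) * xM = 0 := snd_mul_snd _ _

lemma pair_pow (p : Polynomial K) (n : ℕ) :
    (mk' p 0 : ModelB K) ^ n = mk' (p ^ n) 0 := by
  induction n with
  | zero => rw [pow_zero, pow_zero]; exact one_def
  | succ n ih =>
      rw [pow_succ, pow_succ, ih]
      refine Prod.ext (by simp [mul_def]) ?_
      funext i
      fin_cases i <;> simp [mul_def, snd_zero]

end ModelB

open ModelB in
def fgen : Fin 3 → ModelB K := ![aM, xM, yM]

def phi0 : FreeAlgebra K (Fin 3) →ₐ[K] ModelB K := FreeAlgebra.lift K (fgen K)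

open ModelB in
lemma phi0_rel : ∀ u w, paperRel K u w → phi0 K u = phi0 K w := by
  rintro u w ⟨hu, rfl⟩
  rw [map_zero]
  have h0 : phi0 K (FreeAlgebra.ι K (0 : Fin 3)) = aM := by
    simp [phi0, FreeAlgebra.lift_ι_apply, fgen]
  have h1 : phi0 K (FreeAlgebra.ι K (1 : Fin 3)) = xM := by
    simp [phi0, FreeAlgebra.lift_ι_apply, fgen]
  have h2 : phi0 K (FreeAlgebra.ι K (2 : Fin 3)) = yM := by
    simp [phi0, FreeAlgebra.lift_ι_apply, fgen]
  simp only [paperGens, Set.mem_insert_iff, Set.mem_singleton_iff] at hu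
  rcases hu with rfl | rfl | rfl | rfl | rfl | rfl | rfl | rfl <;>
    simp only [map_sub, map_mul, map_pow, h0, h1, h2, pow_two] <;>
    simp [aM_mul_xM, aM_mul_yM, xM_mul_aM, yM_mul_aM, xM_mul_xM, yM_mul_yM, xM_mul_yM, yM_mul_xM]

def phi : paperA K →ₐ[K] ModelB K := RingQuot.liftAlgHom K ⟨phi0 K, phi0_rel K⟩

lemma phi_mk (w : FreeAlgebra K (Fin 3)) : phi K (paperMk K w) = phi0 K w := by
  simp [phi, paperMk, RingQuot.liftAlgHom_mkAlgHom_apply]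

/-! ### Relations in A -/

def aA : paperA K := paperMk K (FreeAlgebra.ι K (0 : Fin 3))
def xA : paperA K := paperMk K (FreeAlgebra.ι K (1 : Fin 3))
def yA : paperA K := paperMk K (FreeAlgebra.ι K (2 : Fin 3))

variable {K}

lemma relA {u : FreeAlgebra K (Fin 3)} (hu : u ∈ paperGens K) : paperMk K u = 0 := by
  have h := RingQuot.mkAlgHom_rel K (s := paperRel K) (x := u) (y := 0) ⟨hu, rfl⟩
  simpa [paperMk] using h

lemma gens_explicit : paperGens K =
    {FreeAlgebra.ι K (0:Fin 3) * FreeAlgebra.ι K 1 - FreeAlgebra.ι K 2,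
     FreeAlgebra.ι K (0:Fin 3) * FreeAlgebra.ι K 2,
     FreeAlgebra.ι K (1:Fin 3) * FreeAlgebra.ι K 0,
     FreeAlgebra.ι K (2:Fin 3) * FreeAlgebra.ι K 0,
     FreeAlgebra.ι K (1:Fin 3) ^ 2, FreeAlgebra.ι K (2:Fin 3) ^ 2,
     FreeAlgebra.ι K (1:Fin 3) * FreeAlgebra.ι K 2,
     FreeAlgebra.ι K (2:Fin 3) * FreeAlgebra.ι K 1} := rfl

lemma axA : aA K * xA K = yA K := by
  have h := relA (u := FreeAlgebra.ι K (0:Fin 3) * FreeAlgebra.ι K 1 - FreeAlgebra.ι K 2)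
    (by rw [gens_explicit]; left; rfl)
  rw [map_sub, map_mul] at h
  rw [aA, xA, yA, ← sub_eq_zero]
  exact h

lemma ayA : aA K * yA K = 0 := by
  have h := relA (u := FreeAlgebra.ι K (0:Fin 3) * FreeAlgebra.ι K 2)
    (by rw [gens_explicit]; right; left; rfl)
  rw [map_mul] at h; exact h

lemma xaA : xA K * aA K = 0 := by
  have h := relA (u := FreeAlgebra.ι K (1:Fin 3) * FreeAlgebra.ι K 0)
    (by rw [gens_explicit]; right; right; left; rfl)
  rw [map_mul] at h; exact h

lemma yaA : yA K * aA K = 0 := by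
  have h := relA (u := FreeAlgebra.ι K (2:Fin 3) * FreeAlgebra.ι K 0)
    (by rw [gens_explicit]; right; right; right; left; rfl)
  rw [map_mul] at h; exact h

lemma xxA : xA K * xA K = 0 := by
  have h := relA (u := FreeAlgebra.ι K (1:Fin 3) ^ 2)
    (by rw [gens_explicit]; right; right; right; right; left; rfl)
  rw [pow_two, map_mul] at h; exact h

lemma yyA : yA K * yA K = 0 := by
  have h := relA (u := FreeAlgebra.ι K (2:Fin 3) ^ 2)
    (by rw [gens_explicit]; right; right; right; right; right; left; rfl)
  rw [pow_two, map_mul] at h; exact h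

lemma xyA : xA K * yA K = 0 := by
  have h := relA (u := FreeAlgebra.ι K (1:Fin 3) * FreeAlgebra.ι K 2)
    (by rw [gens_explicit]; right; right; right; right; right; right; left; rfl)
  rw [map_mul] at h; exact h

lemma yxA : yA K * xA K = 0 := by
  have h := relA (u := FreeAlgebra.ι K (2:Fin 3) * FreeAlgebra.ι K 1)
    (by rw [gens_explicit]; right; right; right; right; right; right; right; rfl)
  rw [map_mul] at h; exact h

/-! ### The spanning family -/

variable (K)

def vfam : ℕ ⊕ Fin 2 → paperA K := Sum.elim (fun n => aA K ^ n) ![xA K, yA K]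

@[simp] lemma vfam_inl (n : ℕ) : vfam K (Sum.inl n) = aA K ^ n := rfl
@[simp] lemma vfam_inr0 : vfam K (Sum.inr 0) = xA K := rfl
@[simp] lemma vfam_inr1 : vfam K (Sum.inr 1) = yA K := rfl

def SA : Submodule K (paperA K) := Submodule.span K (Set.range (vfam K))

lemma mem_SA (i : ℕ ⊕ Fin 2) : vfam K i ∈ SA K := Submodule.subset_span ⟨i, rfl⟩

variable {K}

lemma pow_mul_x_mem (m : ℕ) : aA K ^ m * xA K ∈ SA K := by
  rcases m with _ | (_ | n)
  · simpa using mem_SA K (Sum.inr 0)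
  · rw [pow_one, axA]; exact mem_SA K (Sum.inr 1)
  · rw [pow_succ, mul_assoc, axA, pow_succ, mul_assoc, ayA, mul_zero]
    exact (SA K).zero_mem

lemma pow_mul_y_mem (m : ℕ) : aA K ^ m * yA K ∈ SA K := by
  rcases m with _ | n
  · simpa using mem_SA K (Sum.inr 1)
  · rw [pow_succ, mul_assoc, ayA, mul_zero]; exact (SA K).zero_mem

lemma x_mul_pow_mem (m : ℕ) : xA K * aA K ^ m ∈ SA K := by
  rcases m with _ | n
  · simpa using mem_SA K (Sum.inr 0)
  · rw [pow_succ', ← mul_assoc, xaA, zero_mul]; exact (SA K).zero_mem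

lemma y_mul_pow_mem (m : ℕ) : yA K * aA K ^ m ∈ SA K := by
  rcases m with _ | n
  · simpa using mem_SA K (Sum.inr 1)
  · rw [pow_succ', ← mul_assoc, yaA, zero_mul]; exact (SA K).zero_mem

lemma vfam_mul_mem (i j : ℕ ⊕ Fin 2) : vfam K i * vfam K j ∈ SA K := by
  rcases i with m | i <;> rcases j with n | j
  · rw [vfam_inl, vfam_inl, ← pow_add]; exact mem_SA K (Sum.inl (m + n))
  · fin_cases j
    · exact pow_mul_x_mem m
    · exact pow_mul_y_mem m
  · fin_cases i
    · exact x_mul_pow_mem n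
    · exact y_mul_pow_mem n
  · fin_cases i <;> fin_cases j <;>
      simp only [Fin.zero_eta, Fin.mk_one, vfam_inr0, vfam_inr1, xxA, xyA, yxA, yyA] <;>
      exact (SA K).zero_mem

lemma SA_mul_mem {u w : paperA K} (hu : u ∈ SA K) (hw : w ∈ SA K) : u * w ∈ SA K := by
  induction hu using Submodule.span_induction with
  | mem u hu =>
    induction hw using Submodule.span_induction with
    | mem w hw =>
      obtain ⟨i, rfl⟩ := hu
      obtain ⟨j, rfl⟩ := hw
      exact vfam_mul_mem i j
    | zero => rw [mul_zero]; exact (SA K).zero_mem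
    | add w₁ w₂ h₁ h₂ ih₁ ih₂ => rw [mul_add]; exact (SA K).add_mem ih₁ ih₂
    | smul r w h ih => rw [mul_smul_comm]; exact (SA K).smul_mem r ih
  | zero => rw [zero_mul]; exact (SA K).zero_mem
  | add u₁ u₂ h₁ h₂ ih₁ ih₂ => rw [add_mul]; exact (SA K).add_mem ih₁ ih₂
  | smul r u h ih => rw [smul_mul_assoc]; exact (SA K).smul_mem r ih

lemma SA_eq_top : SA K = ⊤ := by
  rw [eq_top_iff]
  rintro z -
  obtain ⟨w, rfl⟩ := RingQuot.mkAlgHom_surjective K (paperRel K) z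
  induction w using FreeAlgebra.induction with
  | grade0 r =>
    rw [AlgHom.commutes]
    rw [Algebra.algebraMap_eq_smul_one]
    have h1 : (1 : paperA K) ∈ SA K := by simpa using mem_SA K (Sum.inl 0)
    exact (SA K).smul_mem r h1
  | grade1 i =>
    fin_cases i
    · simpa [aA, paperMk] using mem_SA K (Sum.inl 1)
    · exact mem_SA K (Sum.inr 0)
    · exact mem_SA K (Sum.inr 1)
  | mul a b ha hb => rw [map_mul]; exact SA_mul_mem ha hb
  | add a b ha hb => rw [map_add]; exact (SA K).add_mem ha hb

/-! ### Linear independence via the model -/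

variable (K)

def toProd : ModelB K ≃ₗ[K] Polynomial K × (Fin 2 → K) :=
  { toFun := fun u => u, invFun := fun u => u, map_add' := fun _ _ => rfl,
    map_smul' := fun _ _ => rfl, left_inv := fun _ => rfl, right_inv := fun _ => rfl }

@[simp] lemma toProd_apply (u : ModelB K) : toProd K u = u := rfl

def modelBasis : Module.Basis (ℕ ⊕ Fin 2) K (ModelB K) :=
  ((Polynomial.basisMonomials K).prod (Pi.basisFun K (Fin 2))).map (toProd K).symm

variable {K}

lemma phi_aA : phi K (aA K) = ModelB.aM := by
  rw [aA, phi_mk]; simp [phi0, FreeAlgebra.lift_ι_apply, fgen]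

lemma phi_xA : phi K (xA K) = ModelB.xM := by
  rw [xA, phi_mk]; simp [phi0, FreeAlgebra.lift_ι_apply, fgen]

lemma phi_yA : phi K (yA K) = ModelB.yM := by
  rw [yA, phi_mk]; simp [phi0, FreeAlgebra.lift_ι_apply, fgen]

lemma phi_vfam (i : ℕ ⊕ Fin 2) : phi K (vfam K i) = modelBasis K i := by
  apply (toProd K).injective
  rw [modelBasis, Module.Basis.map_apply, LinearEquiv.apply_symm_apply]
  rcases i with n | j
  · rw [vfam_inl, map_pow, phi_aA, ModelB.aM, ModelB.pair_pow]
    simp [Module.Basis.prod_apply, Polynomial.coe_basisMonomials, ModelB.mk',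
      Polynomial.X_pow_eq_monomial]; rfl
  · fin_cases j
    · simp only [Fin.zero_eta, Fin.isValue, id_eq]
      rw [vfam_inr0, phi_xA, ModelB.xM]
      simp [Module.Basis.prod_apply, ModelB.mk', Pi.basisFun_apply]; rfl
    · simp only [Fin.mk_one, Fin.isValue, id_eq]
      rw [vfam_inr1, phi_yA, ModelB.yM]
      simp [Module.Basis.prod_apply, ModelB.mk', Pi.basisFun_apply]; rfl

lemma vfam_li : LinearIndependent K (vfam K) := by
  have h : (phi K).toLinearMap ∘ vfam K = ⇑(modelBasis K) := funext fun i => phi_vfam i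
  have h2 : LinearIndependent K ((phi K).toLinearMap ∘ vfam K) := by
    rw [h]; exact (modelBasis K).linearIndependent
  exact h2.of_comp _


end

/-- The images of the powers aⁿ (n ∈ ℕ) together with the images of x and y form a
K-vector space basis of A. -/
theorem stmt7 (K : Type*) [Field K] :
    ∃ b : Module.Basis (ℕ ⊕ Fin 2) K (paperA K),
      (∀ n : ℕ, b (Sum.inl n) = paperMk K (FreeAlgebra.ι K (0 : Fin 3)) ^ n) ∧
      b (Sum.inr 0) = paperMk K (FreeAlgebra.ι K (1 : Fin 3)) ∧
      b (Sum.inr 1) = paperMk K (FreeAlgebra.ι K (2 : Fin 3)) := by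
  refine ⟨Module.Basis.mk (vfam_li (K := K)) SA_eq_top.ge, ?_, ?_, ?_⟩
  · intro n; exact (Module.Basis.mk_apply _ _ _).trans rfl
  · exact (Module.Basis.mk_apply _ _ _).trans rfl
  · exact (Module.Basis.mk_apply _ _ _).trans rfl
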